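/- Let T be the n×n tridiagonal Toeplitz matrix with 1 on the diagonal, -u on the superdiagonal, and -l on the subdiagonal, where 4lu < 1, lu ≠ 0. With λ± = (1 ± √(1−4lu))/2, the matrix with entries (T^{-1})_{ij} = u^{j-i} (λ₊^i − λ₋^i)(λ₊^{n-j+1} − λ₋^{n-j+1}) / ((λ₊ − λ₋)(λ₊^{n+1} − λ₋^{n+1})) for i ≤ j, and (T^{-1})_{ij} = l^{i-j} (λ₊^j − λ₋^j)(λ₊^{n-i+1} − λ₋^{n-i+1}) / ((λ₊ − λ₋)(λ₊^{n+1} − λ₋^{n+1})) for i ≥ j, is the inverse of T. -/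

import Mathlib

theorem toeplitz_tridiagonal_inverse (n : ℕ) (hn : 1 ≤ n) (l u : ℝ)
    (hlu : l * u ≠ 0) (hlu4 : 4 * l * u < 1)
    (lp lm : ℝ)
    (hlp : lp = (1 + Real.sqrt (1 - 4 * l * u)) / 2)
    (hlm : lm = (1 - Real.sqrt (1 - 4 * l * u)) / 2)
    (T : Matrix (Fin n) (Fin n) ℝ)
    (hT : ∀ i j : Fin n, T i j =
      if i = j then 1
      else if (j : ℕ) = (i : ℕ) + 1 then -u
      else if (i : ℕ) = (j : ℕ) + 1 then -l
      else 0)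
    (M : Matrix (Fin n) (Fin n) ℝ)
    (hM : ∀ i j : Fin n, M i j =
      if (i : ℕ) ≤ (j : ℕ) then
        u ^ ((j : ℕ) - (i : ℕ)) * (lp ^ ((i : ℕ) + 1) - lm ^ ((i : ℕ) + 1))
          * (lp ^ (n - (j : ℕ))- lm ^ (n - (j : ℕ)))
          / ((lp - lm) * (lp ^ (n + 1) - lm ^ (n + 1)))
      else
        l ^ ((i : ℕ) - (j : ℕ)) * (lp ^ ((j : ℕ) + 1) - lm ^ ((j : ℕ) + 1))
          * (lp ^ (n - (i : ℕ)) - lm ^ (n - (i : ℕ)))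
          / ((lp - lm) * (lp ^ (n + 1) - lm ^ (n + 1)))) :
    T * M = 1 ∧ M * T = 1 := by
  have h14 : (0:ℝ) < 1 - 4 * l * u := by linarith
  have hs2 : Real.sqrt (1 - 4 * l * u) ^ 2 = 1 - 4 * l * u := Real.sq_sqrt h14.le
  have hspos : 0 < Real.sqrt (1 - 4 * l * u) := Real.sqrt_pos.mpr h14
  have hm2 : lm = 1 - lp := by rw [hlp, hlm]; ring
  subst hm2
  have hprod : l * u = lp * (1 - lp) := by
    rw [hlp]; linear_combination (1/4 : ℝ) * hs2
  have habs : |1 - lp| < lp := by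
    rw [abs_lt]; constructor <;> rw [hlp] <;> nlinarith [hspos]
  have hFpos : ∀ k : ℕ, 0 < lp ^ (k+1) - (1-lp) ^ (k+1) := by
    intro k
    have h1 : (1-lp) ^ (k+1) ≤ |1-lp| ^ (k+1) := by
      rw [← abs_pow]; exact le_abs_self _
    have h2 : |1-lp| ^ (k+1) < lp ^ (k+1) :=
      pow_lt_pow_left₀ habs (abs_nonneg _) (Nat.succ_ne_zero k)
    linarith
  have hD : (lp - (1 - lp)) * (lp ^ (n + 1) - (1 - lp) ^ (n + 1)) ≠ 0 := by
    have h1 : 0 < lp - (1 - lp) := by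
      rw [abs_lt] at habs; linarith [habs.1]
    exact ne_of_gt (mul_pos h1 (hFpos n))
  have hMval : ∀ (a b : ℕ) (ha : a < n) (hb : b < n), M ⟨a,ha⟩ ⟨b,hb⟩ =
      if a ≤ b then
        u ^ (b - a) * (lp ^ (a+1) - (1-lp) ^ (a+1)) * (lp ^ (n-b) - (1-lp) ^ (n-b))
          / ((lp - (1 - lp)) * (lp ^ (n + 1) - (1 - lp) ^ (n + 1)))
      else
        l ^ (a-b) * (lp ^ (b+1) - (1-lp) ^ (b+1)) * (lp ^ (n-a) - (1-lp) ^ (n-a))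
          / ((lp - (1 - lp)) * (lp ^ (n + 1) - (1 - lp) ^ (n + 1))) :=
    fun a b ha hb => hM ⟨a,ha⟩ ⟨b,hb⟩
  have key : T * M = 1 := by
    ext ⟨iv, hi⟩ ⟨jv, hj⟩
    rw [Matrix.mul_apply, Matrix.one_apply]
    have hsum : (∑ k, T ⟨iv,hi⟩ k * M k ⟨jv,hj⟩) =
        M ⟨iv,hi⟩ ⟨jv,hj⟩
        + (if h : iv + 1 < n then -u * M ⟨iv+1, h⟩ ⟨jv,hj⟩ else 0)
        + (if _ : 1 ≤ iv then -l * M ⟨iv-1, lt_of_le_of_lt (Nat.sub_le _ _) hi⟩ ⟨jv,hj⟩ else 0) := by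
      have step : ∀ k : Fin n, T ⟨iv,hi⟩ k * M k ⟨jv,hj⟩ =
          (if k = ⟨iv,hi⟩ then M ⟨iv,hi⟩ ⟨jv,hj⟩ else 0)
        + (if (k:ℕ) = iv + 1 then -u * M k ⟨jv,hj⟩ else 0)
        + (if iv = (k:ℕ) + 1 then -l * M k ⟨jv,hj⟩ else 0) := by
        intro k
        rw [hT]
        simp only [Fin.ext_iff, Fin.val_mk]
        split_ifs <;>
          first
            | (exfalso; omega)
            | (subst_eqs <;> ring_nf)
      rw [Finset.sum_congr rfl (fun k _ => step k), Finset.sum_add_distrib,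
        Finset.sum_add_distrib]
      congr 1
      · congr 1
        · simp
        · split_ifs with h
          · rw [Finset.sum_eq_single (⟨iv+1, h⟩ : Fin n)]
            · simp
            · intro b _ hb; rw [if_neg (by simpa [Fin.ext_iff] using hb)]
            · simp
          · exact Finset.sum_eq_zero fun k _ => if_neg (by have := k.isLt; omega)
      · split_ifs with h
        · rw [Finset.sum_eq_single (⟨iv-1, lt_of_le_of_lt (Nat.sub_le _ _) hi⟩ : Fin n)]
          · rw [if_pos (by simp; omega)]
          · intro b _ hb; rw [if_neg (by simp [Fin.ext_iff] at hb ⊢; omega)]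
          · simp
        · exact Finset.sum_eq_zero fun k _ => if_neg (by omega)
    rw [hsum]
    simp only [Fin.mk.injEq]
    rcases lt_trichotomy iv jv with hlt | rfl | hgt
    · -- case iv < jv
      rw [if_neg (by omega), dif_pos (show iv + 1 < n by omega)]
      rcases Nat.eq_zero_or_pos iv with rfl | hpos
      · rw [dif_neg (by omega)]
        obtain ⟨d, rfl⟩ : ∃ d, jv = d + 1 := ⟨jv - 1, by omega⟩
        obtain ⟨e, he⟩ : ∃ e, n - (d+1) = e + 1 := ⟨n - (d+1) - 1, by omega⟩
        rw [hMval, hMval, if_pos (by omega), if_pos (by omega), he]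
        rw [show d + 1 - 0 = d + 1 from rfl, show d + 1 - (0 + 1) = d from by omega,
          add_zero, ← mul_div_assoc, ← add_div, div_eq_zero_iff]
        left; ring

      · rw [dif_pos (show 1 ≤ iv from hpos)]
        obtain ⟨i', rfl⟩ : ∃ i', iv = i' + 1 := ⟨iv - 1, by omega⟩
        obtain ⟨d, rfl⟩ : ∃ d, jv = i' + 1 + (d + 1) := ⟨jv - i' - 2, by omega⟩
        obtain ⟨e, he⟩ : ∃ e, n - (i' + 1 + (d+1)) = e + 1 := ⟨n - (i'+1+(d+1)) - 1, by omega⟩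
        rw [hMval, hMval, hMval, if_pos (by omega), if_pos (by omega), if_pos (by omega), he]
        rw [show i' + 1 + (d + 1) - (i' + 1) = d + 1 from by omega,
          show i' + 1 + (d + 1) - (i' + 1 + 1) = d from by omega,
          show i' + 1 - 1 = i' from by omega,
          show i' + 1 + (d + 1) - i' = d + 2 from by omega,
          ← mul_div_assoc, ← mul_div_assoc, ← add_div, ← add_div,
          div_eq_zero_iff]
        left
        linear_combination (-(u^(d+1) * (lp^(i'+1) - (1-lp)^(i'+1))
          * (lp^(e+1) - (1-lp)^(e+1)))) * hprod

    · -- case iv = jv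
      rw [if_pos rfl]
      rcases Nat.eq_zero_or_pos iv with rfl | hpos
      · by_cases h1 : 0 + 1 < n
        · rw [dif_pos h1, dif_neg (by omega)]
          obtain ⟨e, he⟩ : ∃ e, n - 1 = e + 1 := ⟨n - 2, by omega⟩
          have hne : n = e + 2 := by omega
          rw [hMval, hMval, if_pos (by omega), if_neg (by omega)]
          rw [show n - 0 = n from rfl, show n - (0 + 1) = e + 1 from by omega,
            add_zero, ← mul_div_assoc, ← add_div, div_eq_iff hD, one_mul, hne]
          linear_combination (-((lp - (1-lp)) * (lp^(e+1) - (1-lp)^(e+1)))) * hprod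

        · rw [dif_neg h1, dif_neg (by omega)]
          have hne : n = 1 := by omega
          rw [hMval, if_pos (by omega)]
          rw [show n - 0 = n from rfl, add_zero, add_zero, div_eq_iff hD, one_mul, hne]
          ring

      · rw [dif_pos (show 1 ≤ iv from hpos)]
        obtain ⟨i', rfl⟩ : ∃ i', iv = i' + 1 := ⟨iv - 1, by omega⟩
        by_cases h1 : i' + 1 + 1 < n
        · rw [dif_pos h1]
          obtain ⟨e, he⟩ : ∃ e, n - (i'+1+1) = e + 1 := ⟨n - (i'+1+1) - 1, by omega⟩
          rw [hMval, hMval, hMval, if_pos (by omega), if_neg (by omega), if_pos (by omega)]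
          have hne : n = i' + e + 3 := by omega
          rw [show i' + 1 - (i' + 1) = 0 from by omega,
            show i' + 1 + 1 - (i' + 1) = 1 from by omega,
            show i' + 1 - 1 = i' from by omega,
            show i' + 1 - i' = 1 from by omega,
            show n - (i' + 1) = e + 2 from by omega,
            show n - (i' + 1 + 1) = e + 1 from by omega,
            ← mul_div_assoc, ← mul_div_assoc, ← add_div, ← add_div,
            div_eq_iff hD, one_mul, hne]
          linear_combination (-((lp^(i'+2) - (1-lp)^(i'+2)) * (lp^(e+1) - (1-lp)^(e+1))
            + (lp^(i'+1) - (1-lp)^(i'+1)) * (lp^(e+2) - (1-lp)^(e+2)))) * hprod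

        · rw [dif_neg h1]
          have hne : n = i' + 2 := by omega
          rw [hMval, hMval, if_pos (by omega), if_pos (by omega)]
          rw [show i' + 1 - (i' + 1) = 0 from by omega,
            show i' + 1 - 1 = i' from by omega,
            show i' + 1 - i' = 1 from by omega,
            show n - (i' + 1) = 1 from by omega,
            ← mul_div_assoc, add_zero, ← add_div,
            div_eq_iff hD, one_mul, hne]
          linear_combination (-((lp^(i'+1) - (1-lp)^(i'+1)) * (lp - (1-lp)))) * hprod

    · -- case iv > jv
      rw [if_neg (by omega), dif_pos (show 1 ≤ iv by omega)]
      rcases eq_or_lt_of_le (show jv + 1 ≤ iv by omega) with rfl | hgt2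
      · -- iv = jv + 1
        by_cases h1 : jv + 1 + 1 < n
        · rw [dif_pos h1]
          obtain ⟨e, he⟩ : ∃ e, n - (jv+1+1) = e + 1 := ⟨n - (jv+1+1) - 1, by omega⟩
          rw [hMval, hMval, hMval, if_neg (by omega), if_neg (by omega), if_pos (by omega)]
          rw [show jv + 1 - jv = 1 from by omega,
            show jv + 1 + 1 - jv = 2 from by omega,
            show jv + 1 - 1 = jv from by omega,
            show jv - jv = 0 from by omega,
            he, show n - (jv + 1) = e + 2 from by omega,
            show n - jv = e + 3 from by omega,
            ← mul_div_assoc, ← mul_div_assoc, ← add_div, ← add_div,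
            div_eq_zero_iff]
          left
          linear_combination (-(l * (lp^(jv+1) - (1-lp)^(jv+1))
            * (lp^(e+1) - (1-lp)^(e+1)))) * hprod

        · rw [dif_neg h1]
          have hne : n - (jv + 1) = 1 := by omega
          rw [hMval, hMval, if_neg (by omega), if_pos (by omega)]
          rw [show jv + 1 - jv = 1 from by omega,
            show jv + 1 - 1 = jv from by omega,
            show jv - jv = 0 from by omega,
            hne, show n - jv = 2 from by omega,
            ← mul_div_assoc, add_zero, ← add_div,
            div_eq_zero_iff]
          left; ring

      · -- iv ≥ jv + 2
        obtain ⟨c, rfl⟩ : ∃ c, iv = jv + 2 + c := ⟨iv - jv - 2, by omega⟩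
        by_cases h1 : jv + 2 + c + 1 < n
        · rw [dif_pos h1]
          obtain ⟨e, he⟩ : ∃ e, n - (jv+2+c+1) = e + 1 := ⟨n - (jv+2+c+1) - 1, by omega⟩
          rw [hMval, hMval, hMval, if_neg (by omega), if_neg (by omega), if_neg (by omega)]
          rw [show jv + 2 + c - jv = c + 2 from by omega,
            show jv + 2 + c + 1 - jv = c + 3 from by omega,
            show jv + 2 + c - 1 - jv = c + 1 from by omega,
            he, show n - (jv + 2 + c) = e + 2 from by omega,
            show n - (jv + 2 + c - 1) = e + 3 from by omega,
            ← mul_div_assoc, ← mul_div_assoc, ← add_div, ← add_div,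
            div_eq_zero_iff]
          left
          linear_combination (-(l^(c+2) * (lp^(jv+1) - (1-lp)^(jv+1))
            * (lp^(e+1) - (1-lp)^(e+1)))) * hprod

        · rw [dif_neg h1]
          have hne : n - (jv + 2 + c) = 1 := by omega
          rw [hMval, hMval, if_neg (by omega), if_neg (by omega)]
          rw [show jv + 2 + c - jv = c + 2 from by omega,
            show jv + 2 + c - 1 - jv = c + 1 from by omega,
            hne, show n - (jv + 2 + c - 1) = 2 from by omega,
            ← mul_div_assoc, add_zero, ← add_div,
            div_eq_zero_iff]
          left; ring
  exact ⟨key, mul_eq_one_comm.mp key⟩
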